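/- Let ℓ ≥ 2 and let G_1,...,G_ℓ be equitable Hamiltonian-laceable bipartite graphs with the same number of vertices (each with at least 2 vertices), and let G be a bipartite weld of G_1,...,G_ℓ. Then G is Hamiltonian-laceable. -/

import Mathlib

open Finset

/-- A paired `k`-PDPC of `G` with prescribed endpoints `s i`, `t i`. -/
def IsPDPC {V : Type} [Fintype V] (G : SimpleGraph V) {k : ℕ} (s t : Fin k → V) : Prop :=
  ∃ P : (i : Fin k) → G.Walk (s i) (t i),
    (∀ i, (P i).IsPath) ∧
    (∀ i j, i ≠ j → ∀ v, v ∈ (P i).support → v ∉ (P j).support) ∧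
    (∀ v : V, ∃ i, v ∈ (P i).support)

/-- `V1, V2` form a bipartition of `G` into partite sets. -/
def IsBipartition {V : Type} (G : SimpleGraph V) (V1 V2 : Finset V) : Prop :=
  (∀ v, v ∈ V1 ∨ v ∈ V2) ∧ (∀ v, ¬(v ∈ V1 ∧ v ∈ V2)) ∧
  (∀ ⦃u v⦄, G.Adj u v → (u ∈ V1 ∧ v ∈ V2) ∨ (u ∈ V2 ∧ v ∈ V1))

/-- `G` on `Fin ℓ × W` is a weld of the graphs `Gs i`: each layer `i` is a copy of `Gs i`
and between any two distinct layers the edges of `G` form a perfect matching. -/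
def IsWeld {ℓ : ℕ} {W : Type} (G : SimpleGraph (Fin ℓ × W)) (Gs : Fin ℓ → SimpleGraph W) : Prop :=
  (∀ i u v, G.Adj (i, u) (i, v) ↔ (Gs i).Adj u v) ∧
  (∀ i j, i ≠ j → ∃ f : W ≃ W, ∀ u v, G.Adj (i, u) (j, v) ↔ v = f u)

/-- `p` is a Hamiltonian path. -/
def IsHamPath {V : Type} {G : SimpleGraph V} {u v : V} (p : G.Walk u v) : Prop :=
  p.IsPath ∧ ∀ w : V, w ∈ p.support

/-- `G` is Hamiltonian-connected. -/
def HamConnected {V : Type} (G : SimpleGraph V) : Prop :=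
  ∀ u v : V, u ≠ v → ∃ p : G.Walk u v, IsHamPath p

/-- `G` is Hamiltonian-laceable with partite sets `V1, V2`. -/
def HamLaceableOn {V : Type} (G : SimpleGraph V) (V1 V2 : Finset V) : Prop :=
  IsBipartition G V1 V2 ∧ ∀ u ∈ V1, ∀ v ∈ V2, ∃ p : G.Walk u v, IsHamPath p

/-- `G` is Hamiltonian-laceable. -/
def HamLaceable {V : Type} (G : SimpleGraph V) : Prop :=
  ∃ V1 V2 : Finset V, HamLaceableOn G V1 V2

lemma bip_parity {V : Type} {H : SimpleGraph V} {C D : Finset V}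
    (hb : IsBipartition H C D) {u v : V} (p : H.Walk u v) :
    ((u ∈ C) ↔ (v ∈ C)) ↔ Even p.length := by
  induction p with
  | nil => simp
  | @cons u w v h q ih =>
    have h1 : (u ∈ C) ↔ ¬ (w ∈ C) := by
      rcases hb.2.2 h with ⟨h2, h3⟩ | ⟨h2, h3⟩
      · exact ⟨fun _ => fun hw => hb.2.1 w ⟨hw, h3⟩, fun _ => h2⟩
      · constructor
        · intro hu; exact absurd ⟨hu, h2⟩ (hb.2.1 u)
        · intro hw; exact absurd h3 hw
    simp only [SimpleGraph.Walk.length_cons, Nat.even_add_one, ← ih]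
    tauto

lemma two_bip {V : Type} {H : SimpleGraph V} {A B X Y : Finset V}
    (h1 : IsBipartition H A B) (h2 : IsBipartition H X Y) {a b : V}
    (p : H.Walk a b) (ha : a ∈ X) (hb : b ∈ Y) :
    (a ∈ A ∧ b ∈ B) ∨ (a ∈ B ∧ b ∈ A) := by
  have e1 := bip_parity h1 p
  have e2 := bip_parity h2 p
  have hbX : b ∉ X := fun h => h2.2.1 b ⟨h, hb⟩
  have : ¬ Even p.length := by rw [← e2]; tauto
  have hAB : ¬ ((a ∈ A) ↔ (b ∈ A)) := by rw [e1]; exact this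
  have := h1.1 a; have := h1.1 b
  have := h1.2.1 a; have := h1.2.1 b
  tauto

lemma lace_reach {V : Type} {H : SimpleGraph V} {A B : Finset V}
    (hl : HamLaceableOn H A B) (hA : A.Nonempty) (hB : B.Nonempty) :
    ∀ u v : V, Nonempty (H.Walk u v) := by
  intro u v
  rcases hl.1.1 u with hu | hu <;> rcases hl.1.1 v with hv | hv
  · obtain ⟨b, hb⟩ := hB
    obtain ⟨p, _⟩ := hl.2 u hu b hb
    obtain ⟨q, _⟩ := hl.2 v hv b hb
    exact ⟨p.append q.reverse⟩
  · obtain ⟨p, _⟩ := hl.2 u hu v hv; exact ⟨p⟩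
  · obtain ⟨p, _⟩ := hl.2 v hv u hu; exact ⟨p.reverse⟩
  · obtain ⟨a, ha⟩ := hA
    obtain ⟨p, _⟩ := hl.2 a ha u hu
    obtain ⟨q, _⟩ := hl.2 a ha v hv
    exact ⟨p.reverse.append q⟩


/-- the embedding of layer `k` as a graph hom -/
@[reducible] def layerHom {ℓ : ℕ} {W : Type} {Gs : Fin ℓ → SimpleGraph W}
    {G : SimpleGraph (Fin ℓ × W)} (hweld : IsWeld G Gs) (k : Fin ℓ) :
    Gs k →g G where
  toFun := fun w => (k, w)
  map_rel' := fun h => (hweld.1 k _ _).2 h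

@[simp] lemma layerHom_apply {ℓ : ℕ} {W : Type} {Gs : Fin ℓ → SimpleGraph W}
    {G : SimpleGraph (Fin ℓ × W)} (hweld : IsWeld G Gs) (k : Fin ℓ) (w : W) :
    layerHom hweld k w = (k, w) := rfl

lemma layerHom_inj {ℓ : ℕ} {W : Type} {Gs : Fin ℓ → SimpleGraph W}
    {G : SimpleGraph (Fin ℓ × W)} (hweld : IsWeld G Gs) (k : Fin ℓ) :
    Function.Injective (layerHom hweld k) := by
  intro a b h
  simpa [Prod.ext_iff] using h

lemma mem_layer_map {ℓ : ℕ} {W : Type} {Gs : Fin ℓ → SimpleGraph W}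
    {G : SimpleGraph (Fin ℓ × W)} (hweld : IsWeld G Gs) (k : Fin ℓ)
    {a b : W} (p : (Gs k).Walk a b) (q : Fin ℓ × W) :
    q ∈ (p.map (layerHom hweld k)).support ↔ (q.1 = k ∧ q.2 ∈ p.support) := by
  rw [SimpleGraph.Walk.support_map, List.mem_map]
  constructor
  · rintro ⟨w, hw, rfl⟩; exact ⟨rfl, hw⟩
  · rintro ⟨h1, h2⟩; exact ⟨q.2, h2, by rw [layerHom_apply, ← h1]⟩

lemma chain {ℓ : ℕ} {W : Type} {Gs : Fin ℓ → SimpleGraph W}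
    {G : SimpleGraph (Fin ℓ × W)} (hweld : IsWeld G Gs)
    (X Y : Finset (Fin ℓ × W)) (hbp : IsBipartition G X Y)
    (hlay : ∀ (i : Fin ℓ) (a b : W), (i, a) ∈ X → (i, b) ∈ Y →
      ∃ p : (Gs i).Walk a b, IsHamPath p)
    (hY : ∀ i : Fin ℓ, ∃ b : W, (i, b) ∈ Y) :
    ∀ (L : List (Fin ℓ)) (k j : Fin ℓ) (s t : W), (k :: L).Nodup →
      (k :: L).getLast (List.cons_ne_nil k L) = j → (k, s) ∈ X → (j, t) ∈ Y →
      ∃ p : G.Walk (k, s) (j, t), p.IsPath ∧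
        ∀ q : Fin ℓ × W, q ∈ p.support ↔ q.1 ∈ (k :: L) := by
  intro L
  induction L with
  | nil =>
    intro k j s t _ hlast hs ht
    simp only [List.getLast_singleton] at hlast
    subst hlast
    obtain ⟨p, hp, hall⟩ := hlay k s t hs ht
    refine ⟨p.map (layerHom hweld k), p.map_isPath_of_injective (layerHom_inj hweld k) hp, ?_⟩
    intro q
    rw [mem_layer_map]
    simp only [List.mem_singleton]
    exact ⟨fun h => h.1, fun h => ⟨h, hall q.2⟩⟩
  | cons k' L' ih =>
    intro k j s t hnd hlast hs ht
    obtain ⟨x, hx⟩ := hY k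
    obtain ⟨p1, hp1, hall1⟩ := hlay k s x hs hx
    have hkk' : k ≠ k' := by
      intro h; subst h; simp at hnd
    obtain ⟨f, hf⟩ := hweld.2 k k' hkk'
    have hedge : G.Adj (k, x) (k', f x) := (hf x (f x)).2 rfl
    have hfx : (k', f x) ∈ X := by
      rcases hbp.2.2 hedge with ⟨h1, _⟩ | ⟨_, h2⟩
      · exact absurd ⟨h1, hx⟩ (hbp.2.1 (k, x))
      · exact h2
    have hlast' : (k' :: L').getLast (List.cons_ne_nil k' L') = j := by
      rwa [List.getLast_cons (List.cons_ne_nil k' L')] at hlast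
    obtain ⟨p2, hp2, hsup2⟩ := ih k' j (f x) t hnd.of_cons hlast' hfx ht
    refine ⟨(p1.map (layerHom hweld k)).append (SimpleGraph.Walk.cons hedge p2), ?_, ?_⟩
    · rw [SimpleGraph.Walk.isPath_def, SimpleGraph.Walk.support_append,
        SimpleGraph.Walk.support_cons, List.tail_cons]
      rw [List.nodup_append]
      refine ⟨(p1.map_isPath_of_injective (layerHom_inj hweld k) hp1).support_nodup,
        hp2.support_nodup, ?_⟩
      intro q hq q2 hq2 hqq
      subst hqq
      have h1 : q.1 = k := ((mem_layer_map hweld k p1 q).1 hq).1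
      have h2 : q.1 ∈ (k' :: L') := (hsup2 q).1 hq2
      rw [h1] at h2
      exact (List.nodup_cons.1 hnd).1 h2
    · intro q
      rw [SimpleGraph.Walk.support_append, SimpleGraph.Walk.support_cons, List.tail_cons,
        List.mem_append, mem_layer_map, hsup2]
      simp only [List.mem_cons]
      constructor
      · rintro (⟨h1, _⟩ | h1)
        · exact Or.inl h1
        · exact Or.inr h1
      · rintro (h1 | h1)
        · exact Or.inl ⟨h1, hall1 q.2⟩
        · exact Or.inr h1

theorem stmt10 {ℓ : ℕ} (hℓ : 2 ≤ ℓ) {W : Type} [Fintype W] [DecidableEq W]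
    (hW : 2 ≤ Fintype.card W) (Gs : Fin ℓ → SimpleGraph W)
    (hlace : ∀ i, ∃ A B : Finset W, HamLaceableOn (Gs i) A B ∧ A.card = B.card)
    (G : SimpleGraph (Fin ℓ × W)) (hweld : IsWeld G Gs)
    (hbip : ∃ V1 V2 : Finset (Fin ℓ × W), IsBipartition G V1 V2) :
    HamLaceable G := by
  classical
  obtain ⟨V1, V2, hbp⟩ := hbip
  -- per-layer facts
  have layerfacts : ∀ i : Fin ℓ,
      (∀ a b : W, (i, a) ∈ V1 → (i, b) ∈ V2 → ∃ p : (Gs i).Walk a b, IsHamPath p) ∧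
      (∃ a : W, (i, a) ∈ V1) ∧ (∃ b : W, (i, b) ∈ V2) := by
    intro i
    obtain ⟨A, B, hl, hcard⟩ := hlace i
    set X : Finset W := univ.filter (fun w => (i, w) ∈ V1) with hXdef
    set Y : Finset W := univ.filter (fun w => (i, w) ∈ V2) with hYdef
    have hXm : ∀ w : W, w ∈ X ↔ (i, w) ∈ V1 := by intro w; simp [hXdef]
    have hYm : ∀ w : W, w ∈ Y ↔ (i, w) ∈ V2 := by intro w; simp [hYdef]
    have hXY : IsBipartition (Gs i) X Y := by
      refine ⟨fun w => ?_, fun w hw => ?_, fun a b hab => ?_⟩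
      · rcases hbp.1 (i, w) with h | h
        · exact Or.inl ((hXm w).2 h)
        · exact Or.inr ((hYm w).2 h)
      · exact hbp.2.1 (i, w) ⟨(hXm w).1 hw.1, (hYm w).1 hw.2⟩
      · have h := hbp.2.2 ((hweld.1 i a b).2 hab)
        rcases h with ⟨h1, h2⟩ | ⟨h1, h2⟩
        · exact Or.inl ⟨(hXm a).2 h1, (hYm b).2 h2⟩
        · exact Or.inr ⟨(hYm a).2 h1, (hXm b).2 h2⟩
    have hun : A ∪ B = univ := by
      ext w; simp only [mem_union, mem_univ, iff_true]; exact hl.1.1 w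
    have hdis : Disjoint A B := by
      rw [Finset.disjoint_left]; intro a ha hb; exact hl.1.2.1 a ⟨ha, hb⟩
    have hcards : A.card + B.card = Fintype.card W := by
      rw [← Finset.card_union_of_disjoint hdis, hun, card_univ]
    have hAne : A.Nonempty := Finset.card_pos.1 (by omega)
    have hBne : B.Nonempty := Finset.card_pos.1 (by omega)
    have hreach := lace_reach hl hAne hBne
    refine ⟨?_, ?_⟩
    · intro a b ha hb
      obtain ⟨w0⟩ := hreach a b
      rcases two_bip hl.1 hXY w0 ((hXm a).2 ha) ((hYm b).2 hb) with ⟨h1, h2⟩ | ⟨h1, h2⟩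
      · exact hl.2 a h1 b h2
      · obtain ⟨p, hp, hs⟩ := hl.2 b h2 a h1
        exact ⟨p.reverse, hp.reverse, fun w => by
          rw [SimpleGraph.Walk.support_reverse, List.mem_reverse]; exact hs w⟩
    · obtain ⟨a, ha⟩ := hAne
      obtain ⟨b, hb⟩ := hBne
      obtain ⟨p, _, _⟩ := hl.2 a ha b hb
      rcases two_bip hXY hl.1 p ha hb with ⟨h1, h2⟩ | ⟨h1, h2⟩
      · exact ⟨⟨a, (hXm a).1 h1⟩, ⟨b, (hYm b).1 h2⟩⟩
      · exact ⟨⟨b, (hXm b).1 h2⟩, ⟨a, (hYm a).1 h1⟩⟩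
  have hbp' : IsBipartition G V2 V1 :=
    ⟨fun v => (hbp.1 v).symm, fun v h => hbp.2.1 v ⟨h.2, h.1⟩,
      fun u v h => (hbp.2.2 h).symm⟩
  have key1 : ∀ (i : Fin ℓ) (a b : W), (i, a) ∈ V1 → (i, b) ∈ V2 →
      ∃ p : (Gs i).Walk a b, IsHamPath p := fun i a b ha hb => (layerfacts i).1 a b ha hb
  have key2 : ∀ (i : Fin ℓ) (a b : W), (i, a) ∈ V2 → (i, b) ∈ V1 →
      ∃ p : (Gs i).Walk a b, IsHamPath p := by
    intro i a b ha hb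
    obtain ⟨p, hp, hs⟩ := (layerfacts i).1 b a hb ha
    exact ⟨p.reverse, hp.reverse, fun w => by
      rw [SimpleGraph.Walk.support_reverse, List.mem_reverse]; exact hs w⟩
  refine ⟨V1, V2, hbp, ?_⟩
  rintro ⟨i, u'⟩ hu ⟨j, v'⟩ hv
  by_cases hij : i = j
  · -- same layer case
    subst hij
    have huv : u' ≠ v' := by
      intro h; subst h; exact hbp.2.1 (i, u') ⟨hu, hv⟩
    obtain ⟨p, hp, hallp⟩ := key1 i u' v' hu hv
    cases p with
    | nil => exact absurd rfl huv
    | @cons _ w' _ hadj q =>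
      -- list of other layers
      have hMne : (univ.erase i).toList ≠ [] := by
        rw [Ne, Finset.toList_eq_nil]
        intro h
        have h2 : (univ.erase i).card = ℓ - 1 := by
          rw [Finset.card_erase_of_mem (mem_univ i), card_univ, Fintype.card_fin]
        rw [h] at h2; simp at h2; omega
      obtain ⟨k1, rest, hM⟩ := List.exists_cons_of_ne_nil hMne
      have hmemM : ∀ c : Fin ℓ, c ∈ k1 :: rest ↔ c ≠ i := by
        intro c
        rw [← hM, Finset.mem_toList, Finset.mem_erase]
        simp
      have hik1 : i ≠ k1 := fun h => (hmemM k1).1 List.mem_cons_self h.symm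
      set j' : Fin ℓ := (k1 :: rest).getLast (List.cons_ne_nil k1 rest) with hj'def
      have hj'mem : j' ∈ k1 :: rest := List.getLast_mem _
      have hj'i : j' ≠ i := (hmemM j').1 hj'mem
      obtain ⟨f, hf⟩ := hweld.2 i k1 hik1
      have e1 : G.Adj (i, u') (k1, f u') := (hf u' (f u')).2 rfl
      have hstart : (k1, f u') ∈ V2 := by
        rcases hbp.2.2 e1 with ⟨_, h2⟩ | ⟨h1, _⟩
        · exact h2
        · exact absurd ⟨hu, h1⟩ (hbp.2.1 (i, u'))
      obtain ⟨f', hf'⟩ := hweld.2 j' i hj'i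
      set x : W := f'.symm w' with hxdef
      have e2 : G.Adj (j', x) (i, w') := (hf' x w').2 (f'.apply_symm_apply w').symm
      have hw'2 : (i, w') ∈ V2 := by
        have eW : G.Adj (i, u') (i, w') := (hweld.1 i u' w').2 hadj
        rcases hbp.2.2 eW with ⟨_, h2⟩ | ⟨h1, _⟩
        · exact h2
        · exact absurd ⟨hu, h1⟩ (hbp.2.1 (i, u'))
      have hend : (j', x) ∈ V1 := by
        rcases hbp.2.2 e2 with ⟨h1, _⟩ | ⟨_, h2⟩
        · exact h1
        · exact absurd ⟨h2, hw'2⟩ (hbp.2.1 (i, w'))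
      have hMnodup : (k1 :: rest).Nodup := by rw [← hM]; exact Finset.nodup_toList _
      obtain ⟨D, hD, hsupD⟩ := chain hweld V2 V1 hbp' key2
        (fun c => (layerfacts c).2.1) rest k1 j' (f u') x hMnodup rfl hstart hend
      have hqpath : q.IsPath ∧ u' ∉ q.support := by
        rw [SimpleGraph.Walk.cons_isPath_iff] at hp; exact hp
      refine ⟨SimpleGraph.Walk.cons e1 (D.append (SimpleGraph.Walk.cons e2
        (q.map (layerHom hweld i)))), ?_, ?_⟩
      · rw [SimpleGraph.Walk.isPath_def, SimpleGraph.Walk.support_cons,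
          SimpleGraph.Walk.support_append, SimpleGraph.Walk.support_cons, List.tail_cons,
          List.nodup_cons, List.nodup_append]
        refine ⟨?_, hD.support_nodup,
          q.map_isPath_of_injective (layerHom_inj hweld i) hqpath.1 |>.support_nodup, ?_⟩
        · rw [List.mem_append]
          rintro (h | h)
          · exact ((hmemM i).1 ((hsupD (i, u')).1 h)) rfl
          · exact hqpath.2 ((mem_layer_map hweld i q (i, u')).1 h).2
        · intro a ha a2 ha2 haa
          subst haa
          have h1 : a.1 ≠ i := (hmemM a.1).1 ((hsupD a).1 ha)
          exact h1 ((mem_layer_map hweld i q a).1 ha2).1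
      · rintro ⟨c, w⟩
        rw [SimpleGraph.Walk.support_cons, SimpleGraph.Walk.support_append,
          SimpleGraph.Walk.support_cons, List.tail_cons, List.mem_cons, List.mem_append]
        by_cases hc : c = i
        · subst hc
          have hw : w ∈ (SimpleGraph.Walk.cons hadj q).support := hallp w
          rw [SimpleGraph.Walk.support_cons, List.mem_cons] at hw
          rcases hw with h | h
          · exact Or.inl (by rw [h])
          · exact Or.inr (Or.inr ((mem_layer_map hweld c q (c, w)).2 ⟨rfl, h⟩))
        · exact Or.inr (Or.inl ((hsupD (c, w)).2 ((hmemM c).2 hc)))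
  · -- different layers
    set mid : List (Fin ℓ) := ((univ.erase i).erase j).toList with hmiddef
    have hmidmem : ∀ c : Fin ℓ, c ∈ mid ↔ (c ≠ j ∧ c ≠ i) := by
      intro c; rw [hmiddef, Finset.mem_toList, Finset.mem_erase, Finset.mem_erase]; simp
    have hnodup : (i :: (mid ++ [j])).Nodup := by
      rw [List.nodup_cons, List.nodup_append]
      refine ⟨?_, Finset.nodup_toList _, List.nodup_singleton j, ?_⟩
      · rw [List.mem_append, List.mem_singleton]
        rintro (h | h)
        · exact ((hmidmem i).1 h).2 rfl
        · exact hij h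
      · intro a ha b hb
        rw [List.mem_singleton] at hb
        rw [hb]
        exact ((hmidmem a).1 ha).1
    have hlast : (i :: (mid ++ [j])).getLast (List.cons_ne_nil _ _) = j :=
      List.getLast_append_singleton (i :: mid)
    obtain ⟨D, hD, hsupD⟩ := chain hweld V1 V2 hbp key1
      (fun c => (layerfacts c).2.2) (mid ++ [j]) i j u' v' hnodup hlast hu hv
    refine ⟨D, hD, ?_⟩
    rintro ⟨c, w⟩
    rw [hsupD]
    by_cases hc : c = i
    · exact hc ▸ List.mem_cons_self
    · by_cases hc2 : c = j
      · exact List.mem_cons_of_mem _ (List.mem_append_right _ (by rw [List.mem_singleton]; exact hc2))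
      · exact List.mem_cons_of_mem _ (List.mem_append_left _ ((hmidmem c).2 ⟨hc2, hc⟩))
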